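/- Let G be a group, ℓ a commutative unital ring, and R a unital G-graded ℓ-algebra with G abelian (or R trivially graded). Equip the group algebra R[G] with the grading where r·g is homogeneous of degree |r|·g for homogeneous r ∈ R. Then R[G] is strongly graded and the map R → R[G]₁, a = Σ_g a_g ↦ Σ_g a_g·g⁻¹, is an algebra isomorphism onto the degree-one component R[G]₁ = ⊕_{g∈G} R_g ⊗ g⁻¹. -/

import Mathlib

/-- The grading of the group algebra `R[G]` of a `G`-graded ring `R`: the degree-`d`
component is the additive span of the elements `r·g` with `r ∈ R_h` and `h·g = d`. -/
noncomputable def monAlgGrading {G R : Type} [Group G] [Ring R] (ℛ : G → AddSubgroup R) (d : G) :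
    Submodule ℤ (MonoidAlgebra R G) :=
  Submodule.span ℤ {x : MonoidAlgebra R G | ∃ (h g : G) (a : R),
    a ∈ ℛ h ∧ h * g = d ∧ x = MonoidAlgebra.single g a}

/-- The map `R → R[G]`, `a = Σ_g a_g ↦ Σ_g a_g·g⁻¹`. -/
noncomputable def degShift {G R : Type} [Group G] [DecidableEq G] [Ring R]
    (ℛ : G → AddSubgroup R) [DirectSum.Decomposition ℛ] : R → MonoidAlgebra R G :=
  fun a =>
    DirectSum.toAddMonoid
      (fun g => ((MonoidAlgebra.singleAddHom g⁻¹ : R →+ MonoidAlgebra R G).comp (ℛ g).subtype))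
      (DirectSum.decompose ℛ a)


section helpers
variable {G R : Type} [Group G] [DecidableEq G] [Ring R]
  (ℛ : G → AddSubgroup R) [DirectSum.Decomposition ℛ]

lemma degShift_of_mem {g : G} {a : R} (ha : a ∈ ℛ g) :
    degShift ℛ a = MonoidAlgebra.single g⁻¹ a := by
  unfold degShift
  rw [DirectSum.decompose_of_mem ℛ ha, DirectSum.toAddMonoid_of]
  rfl

lemma degShift_add' (a b : R) : degShift ℛ (a + b) = degShift ℛ a + degShift ℛ b := by
  unfold degShift
  rw [DirectSum.decompose_add, map_add]

lemma degShift_zero : degShift ℛ (0 : R) = 0 := by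
  rw [degShift_of_mem ℛ (ℛ 1).zero_mem, MonoidAlgebra.single_zero]

end helpers

/-- Let `G` be a group and `R` a unital `G`-graded ring, with `G` abelian
(or `R` trivially graded).  Equip the group algebra `R[G]` with the grading in which
`r·g` is homogeneous of degree `|r|·g` for homogeneous `r ∈ R`.  Then `R[G]` is strongly
graded, and the map `R → R[G]₁`, `a = Σ_g a_g ↦ Σ_g a_g·g⁻¹`, is a ring isomorphism of
`R` onto the degree-one component `R[G]₁`. -/
theorem stmt_10 {G R : Type} [Group G] [DecidableEq G] [Ring R]
    (ℛ : G → AddSubgroup R) [DirectSum.Decomposition ℛ]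
    (hone : (1 : R) ∈ ℛ 1)
    (hmul : ∀ (g h : G) (a b : R), a ∈ ℛ g → b ∈ ℛ h → a * b ∈ ℛ (g * h))
    (hcompat : (∀ g : G, g ≠ 1 → ℛ g = ⊥) ∨ (∀ a b : G, a * b = b * a)) :
    -- `R[G]` is strongly graded:
    (∀ d e : G, monAlgGrading ℛ d * monAlgGrading ℛ e = monAlgGrading ℛ (d * e)) ∧
    -- `a ↦ Σ_g a_g g⁻¹` is a ring isomorphism of `R` onto the degree-one component:
    (degShift ℛ 1 = 1) ∧
    (∀ a b : R, degShift ℛ (a + b) = degShift ℛ a + degShift ℛ b) ∧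
    (∀ a b : R, degShift ℛ (a * b) = degShift ℛ a * degShift ℛ b) ∧
    Function.Injective (degShift ℛ) ∧
    (∀ x : MonoidAlgebra R G, x ∈ monAlgGrading ℛ 1 ↔ ∃ a : R, degShift ℛ a = x) := by
  -- commuting helper for degrees of two homogeneous elements
  have hcomm : ∀ (g h : G) (a : R), a ∈ ℛ g → (g * h = h * g ∨ a = 0) := by
    rcases hcompat with ht | hc
    · intro g h a ha
      by_cases hg : g = 1
      · left; rw [hg, one_mul, mul_one]
      · right; simpa [ht g hg] using ha
    · intro g h a _; left; exact hc g h
  -- multiplicativity on homogeneous elements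
  have Hhom : ∀ {g h : G} (a b : R), a ∈ ℛ g → b ∈ ℛ h →
      degShift ℛ (a * b) = degShift ℛ a * degShift ℛ b := by
    intro g h a b ha hb
    rw [degShift_of_mem ℛ ha, degShift_of_mem ℛ hb,
      degShift_of_mem ℛ (hmul _ _ _ _ ha hb), MonoidAlgebra.single_mul_single,
      mul_inv_rev]
    rcases hcomm g h a ha with hgh | ha0
    · congr 1
      rw [← mul_inv_rev, ← mul_inv_rev, hgh]
    · simp [ha0]
  have Hmul : ∀ a b : R, degShift ℛ (a * b) = degShift ℛ a * degShift ℛ b := by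
    intro a b
    refine DirectSum.Decomposition.inductionOn ℛ
      (motive := fun a => ∀ b : R, degShift ℛ (a * b) = degShift ℛ a * degShift ℛ b)
      (by simp [degShift_zero]) ?_ ?_ a b
    · intro g m b
      refine DirectSum.Decomposition.inductionOn ℛ
        (motive := fun b => degShift ℛ ((m : R) * b) = degShift ℛ (m : R) * degShift ℛ b)
        (by simp [degShift_zero]) ?_ ?_ b
      · intro h m'
        exact Hhom _ _ m.2 m'.2
      · intro x y ihx ihy
        show degShift ℛ ((m : R) * (x + y)) = _
        rw [mul_add, degShift_add', ihx, ihy, degShift_add', mul_add]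
    · intro x y ihx ihy b
      show degShift ℛ ((x + y) * b) = _
      rw [add_mul, degShift_add', ihx, ihy, degShift_add', add_mul]
  -- left inverse: sum of coefficients
  have Hleft : ∀ a : R,
      Finsupp.liftAddHom (α := G) (M := R) (N := R) (fun _ => AddMonoidHom.id R)
        (degShift ℛ a).coeff = a := by
    intro a
    refine DirectSum.Decomposition.inductionOn ℛ
      (motive := fun a => Finsupp.liftAddHom (α := G) (M := R) (N := R)
        (fun _ => AddMonoidHom.id R) (degShift ℛ a).coeff = a)
      (by simp [degShift_zero]) ?_ ?_ a
    · intro g m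
      show Finsupp.liftAddHom (α := G) (M := R) (N := R)
        (fun _ => AddMonoidHom.id R) (degShift ℛ (m : R)).coeff = (m : R)
      rw [degShift_of_mem ℛ m.2]
      exact Finsupp.liftAddHom_apply_single _ _ _
    · intro x y ihx ihy
      show Finsupp.liftAddHom (α := G) (M := R) (N := R)
        (fun _ => AddMonoidHom.id R) (degShift ℛ (x + y)).coeff = x + y
      rw [degShift_add', MonoidAlgebra.coeff_add, map_add, ihx, ihy]
  refine ⟨?_, ?_, degShift_add' ℛ, Hmul, ?_, ?_⟩
  · -- strongly graded
    intro d e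
    apply le_antisymm
    · rw [monAlgGrading, monAlgGrading, Submodule.span_mul_span, Submodule.span_le]
      rintro x hx
      rw [Set.mem_mul] at hx
      obtain ⟨y, ⟨h, g, a, ha, hhg, rfl⟩, z, ⟨h', g', b, hb, hhg', rfl⟩, rfl⟩ := hx
      rw [SetLike.mem_coe, MonoidAlgebra.single_mul_single]
      rcases hcomm h' g b hb with hc | hb0
      · refine Submodule.subset_span ⟨h * h', g * g', a * b, hmul _ _ _ _ ha hb, ?_, rfl⟩
        rw [← hhg, ← hhg', mul_assoc h h' (g * g'), ← mul_assoc h' g g', hc,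
          mul_assoc g h' g', ← mul_assoc h g (h' * g')]
      · rw [hb0, mul_zero, MonoidAlgebra.single_zero]
        exact Submodule.zero_mem _
    · rw [show monAlgGrading ℛ (d * e) = Submodule.span ℤ _ from rfl, Submodule.span_le]
      rintro x ⟨h, g, a, ha, hhg, rfl⟩
      have key : (MonoidAlgebra.single g a : MonoidAlgebra R G)
          = MonoidAlgebra.single (h⁻¹ * d) a * MonoidAlgebra.single (d⁻¹ * (h * g)) 1 := by
        rw [MonoidAlgebra.single_mul_single, mul_one]
        congr 1
        group
      rw [SetLike.mem_coe, key]
      exact Submodule.mul_mem_mul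
        (Submodule.subset_span ⟨h, h⁻¹ * d, a, ha, by group, rfl⟩)
        (Submodule.subset_span ⟨1, d⁻¹ * (h * g), 1, hone, by rw [one_mul, hhg]; group, rfl⟩)
  · rw [degShift_of_mem ℛ hone, inv_one, MonoidAlgebra.one_def]
  · intro a b hab
    have := congrArg (Finsupp.liftAddHom (α := G) (M := R) (N := R)
      (fun _ => AddMonoidHom.id R)) (congrArg MonoidAlgebra.coeff hab)
    rwa [Hleft, Hleft] at this
  · intro x
    constructor
    · intro hx
      have hle : monAlgGrading ℛ 1 ≤
          AddSubgroup.toIntSubmodule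
            (AddMonoidHom.mk' (degShift ℛ) (degShift_add' ℛ)).range := by
        rw [monAlgGrading, Submodule.span_le]
        rintro y ⟨h, g, a, ha, hhg, rfl⟩
        have hg : g = h⁻¹ := by
          rw [mul_eq_one_iff_eq_inv] at hhg
          rw [hhg, inv_inv]
        refine ⟨a, ?_⟩
        show degShift ℛ a = _
        rw [degShift_of_mem ℛ ha, hg]
      exact hle hx
    · rintro ⟨a, rfl⟩
      refine DirectSum.Decomposition.inductionOn ℛ
        (motive := fun a => degShift ℛ a ∈ monAlgGrading ℛ 1)
        ?_ ?_ ?_ a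
      · show degShift ℛ (0 : R) ∈ monAlgGrading ℛ 1
        rw [degShift_zero]
        exact Submodule.zero_mem _
      · intro g m
        show degShift ℛ (m : R) ∈ monAlgGrading ℛ 1
        rw [degShift_of_mem ℛ m.2]
        exact Submodule.subset_span ⟨g, g⁻¹, m, m.2, mul_inv_cancel g, rfl⟩
      · intro x y ihx ihy
        show degShift ℛ (x + y) ∈ monAlgGrading ℛ 1
        rw [degShift_add']
        exact Submodule.add_mem _ ihx ihy
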